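/- Let n ≥ 3 and let P = M[R_n] + K·E_{n,n} be the subalgebra of M_n(K) of matrices whose n-th row is zero except possibly the (n,n) entry. If B is a proper subalgebra of P with B ≠ M[R_n] and the dimension of B over K equals n² − 2n + 3, then B is similar to one of the two subalgebras M·E_{n,n} + M[R_n, C_1] + K·E_{1,1} or M·E_{n,n} + M[R_n, R_{n-1}] + K·E_{n-1,n-1}; that is, there exists an invertible S ∈ M_n(K) conjugating B onto one of these two subalgebras. -/

import Mathlib

open Pointwise

open Module Matrix
set_option linter.unusedSectionVars false

section Helpers12

open Module Matrix
set_option linter.unusedSectionVars false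

variable {K : Type*} [Field K]

section Supp
variable {ι κ : Type*} [Fintype ι] [Fintype κ] [DecidableEq ι] [DecidableEq κ]

/-- matrices vanishing where `P` holds -/
def suppSub (K : Type*) [Field K] (P : ι → κ → Prop) [∀ i j, Decidable (P i j)] :
    Submodule K (Matrix ι κ K) where
  carrier := {A | ∀ i j, P i j → A i j = 0}
  add_mem' := by intro a b ha hb i j h; simp [Matrix.add_apply, ha i j h, hb i j h]
  zero_mem' := by intro i j h; rfl
  smul_mem' := by intro c a ha i j h; simp [Matrix.smul_apply, ha i j h]

@[simp] lemma mem_suppSub {P : ι → κ → Prop} [∀ i j, Decidable (P i j)]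
    {A : Matrix ι κ K} : A ∈ suppSub K P ↔ ∀ i j, P i j → A i j = 0 := Iff.rfl

noncomputable def suppEquiv (P : ι → κ → Prop) [∀ i j, Decidable (P i j)] :
    (suppSub K P) ≃ₗ[K] ({p : ι × κ // ¬ P p.1 p.2} → K) where
  toFun := fun A p => (A : Matrix ι κ K) p.1.1 p.1.2
  map_add' := fun a b => rfl
  map_smul' := fun c a => rfl
  invFun := fun f => ⟨Matrix.of fun i j => if h : P i j then 0 else f ⟨(i,j), h⟩,
    by intro i j h; simp [h]⟩
  left_inv := by
    intro A; apply Subtype.ext; ext i j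
    by_cases h : P i j
    · simp [h, (A.2 i j h)]
    · simp [h]
  right_inv := by intro f; funext p; simp [p.2]

lemma finrank_suppSub (P : ι → κ → Prop) [∀ i j, Decidable (P i j)] :
    finrank K (suppSub K P) = Fintype.card {p : ι × κ // ¬ P p.1 p.2} := by
  rw [LinearEquiv.finrank_eq (suppEquiv P)]
  simp [Module.finrank_pi]

end Supp

section Helpers
variable {V W : Type*} [AddCommGroup V] [Module K V] [AddCommGroup W] [Module K W]

lemma finrank_map_add_inf_ker [FiniteDimensional K V] (f : V →ₗ[K] W) (p : Submodule K V) :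
    finrank K p = finrank K (p.map f) + finrank K (p ⊓ LinearMap.ker f : Submodule K V) := by
  have h := LinearMap.finrank_range_add_finrank_ker (f.domRestrict p)
  rw [LinearMap.range_domRestrict] at h
  have hker : LinearMap.ker (f.domRestrict p) =
      Submodule.comap p.subtype (p ⊓ LinearMap.ker f) := by
    ext x; simp [LinearMap.mem_ker, LinearMap.domRestrict_apply, x.2]
  have e := Submodule.comapSubtypeEquivOfLe (inf_le_left : p ⊓ LinearMap.ker f ≤ p)
  rw [hker, LinearEquiv.finrank_eq e] at h
  omega

variable {ι : Type*} [Fintype ι] [DecidableEq ι]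

lemma sum_split {n : ℕ} (ℓ : Fin n) (f : Fin n → K) :
    ∑ k, f k = f ℓ + ∑ k : {i : Fin n // i ≠ ℓ}, f k.1 := by
  classical
  rw [← Finset.sum_subtype (Finset.univ.erase ℓ) (by simp) f]
  rw [← Finset.add_sum_erase _ f (Finset.mem_univ ℓ)]

/-- a submodule of `ι → K` invariant under all matrices is ⊥ or ⊤ -/
lemma full_invariant (W : Submodule K (ι → K))
    (hinv : ∀ (A : Matrix ι ι K), ∀ w ∈ W, A.mulVec w ∈ W) : W = ⊥ ∨ W = ⊤ := by
  by_cases h0 : W = ⊥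
  · exact Or.inl h0
  right
  obtain ⟨w, hwW, hw0⟩ := Submodule.exists_mem_ne_zero_of_ne_bot h0
  obtain ⟨j, hj⟩ : ∃ j, w j ≠ 0 := by
    by_contra hc; push_neg at hc; exact hw0 (funext hc)
  apply eq_top_iff.2
  rw [← (Pi.basisFun K ι).span_eq, Submodule.span_le]
  rintro - ⟨i, rfl⟩
  have := hinv (Matrix.single i j (w j)⁻¹) w hwW
  have heq : (Matrix.single i j (w j)⁻¹).mulVec w = Pi.single i 1 := by
    funext r
    simp only [Matrix.mulVec, dotProduct, Matrix.single]
    rw [Finset.sum_eq_single j]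
    · by_cases hri : r = i
      · simp [hri, Pi.single_apply, inv_mul_cancel₀ hj]
      · simp [Pi.single_apply, hri, Ne.symm hri]
    · intro b _ hb; simp [Matrix.of_apply, Ne.symm hb]
    · simp
  rw [heq] at this
  simpa using this

lemma vecMulVec_mulVec_left (A : Matrix ι ι K) (w z : ι → K) :
    A * Matrix.vecMulVec w z = Matrix.vecMulVec (A.mulVec w) z := by
  ext i j
  simp [Matrix.mul_apply, Matrix.vecMulVec_apply, Matrix.mulVec, dotProduct,
    Finset.sum_mul, mul_assoc]

lemma vecMulVec_vecMul_right (A : Matrix ι ι K) (w z : ι → K) :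
    Matrix.vecMulVec w z * A = Matrix.vecMulVec w (Matrix.vecMul z A) := by
  ext i j
  simp [Matrix.mul_apply, Matrix.vecMulVec_apply, Matrix.vecMul, dotProduct,
    Finset.mul_sum, mul_assoc]

lemma stdBasisMatrix_eq_vecMulVec (i j : ι) :
    Matrix.single i j (1 : K) = Matrix.vecMulVec (Pi.single i 1) (Pi.single j 1) := by
  ext r s
  simp [Matrix.single, Matrix.vecMulVec_apply, Pi.single_apply]
  aesop

end Helpers

section VMV
variable {ι : Type*} [Fintype ι] [DecidableEq ι]

lemma vmv_add_left (w w' z : ι → K) :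
    Matrix.vecMulVec (w + w') z = Matrix.vecMulVec w z + Matrix.vecMulVec w' z := by
  ext i j; simp [Matrix.vecMulVec_apply, add_mul]

lemma vmv_add_right (w z z' : ι → K) :
    Matrix.vecMulVec w (z + z') = Matrix.vecMulVec w z + Matrix.vecMulVec w z' := by
  ext i j; simp [Matrix.vecMulVec_apply, mul_add]

lemma vmv_smul_left (c : K) (w z : ι → K) :
    Matrix.vecMulVec (c • w) z = c • Matrix.vecMulVec w z := by
  ext i j; simp [Matrix.vecMulVec_apply, mul_assoc]

lemma vmv_smul_right (c : K) (w z : ι → K) :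
    Matrix.vecMulVec w (c • z) = c • Matrix.vecMulVec w z := by
  ext i j; simp [Matrix.vecMulVec_apply]; ring

lemma vmv_zero_left (z : ι → K) : Matrix.vecMulVec (0 : ι → K) z = 0 := by
  ext i j; simp [Matrix.vecMulVec_apply]

lemma vmv_zero_right (w : ι → K) : Matrix.vecMulVec w (0 : ι → K) = 0 := by
  ext i j; simp [Matrix.vecMulVec_apply]

end VMV

section Core
variable {ι : Type*} [Fintype ι] [DecidableEq ι] [Nonempty ι]

/-- Core: a multiplicatively closed subspace of matrices of dimension at least
`m² - m + 1` is everything or has a nontrivial invariant subspace. -/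
lemma core_lemma (Q : Submodule K (Matrix ι ι K))
    (hmul : ∀ a ∈ Q, ∀ b ∈ Q, a * b ∈ Q)
    (hq : Fintype.card ι * Fintype.card ι - Fintype.card ι + 1 ≤ finrank K Q) :
    Q = ⊤ ∨ ∃ W : Submodule K (ι → K), W ≠ ⊥ ∧ W ≠ ⊤ ∧
      ∀ a ∈ Q, ∀ w ∈ W, a.mulVec w ∈ W := by
  classical
  set m := Fintype.card ι with hm
  obtain ⟨i₀⟩ : Nonempty ι := inferInstance
  -- the row space at i₀
  set R : Submodule K (Matrix ι ι K) := suppSub K (fun i _ => i ≠ i₀) with hR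
  have hRrank : finrank K R = m := by
    rw [finrank_suppSub]
    have e : {p : ι × ι // ¬ p.1 ≠ i₀} ≃ ι :=
      ⟨fun p => p.1.2, fun j => ⟨(i₀, j), by simp⟩,
        fun p => by
          rcases p with ⟨⟨a, b⟩, h⟩
          simp only [ne_eq, not_not] at h
          subst h; rfl,
        fun j => rfl⟩
    rw [Fintype.card_congr e]
  have hmm : finrank K (Matrix ι ι K) = m * m := by
    simp [Module.finrank_matrix, hm]
  -- Q ⊓ R is nonzero
  have hQR : Q ⊓ R ≠ ⊥ := by
    intro hbot
    have h1 := Submodule.finrank_sup_add_finrank_inf_eq Q R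
    have h2 : finrank K ↥(Q ⊔ R) ≤ m * m := by
      have := Submodule.finrank_le (Q ⊔ R) (M := Matrix ι ι K)
      omega
    rw [hbot] at h1
    simp only [finrank_bot] at h1
    have hmpos : 1 ≤ m := Fintype.card_pos
    omega
  obtain ⟨x, hxQR, hx0⟩ := Submodule.exists_mem_ne_zero_of_ne_bot hQR
  have hxQ : x ∈ Q := hxQR.1
  have hxR : ∀ i j, i ≠ i₀ → x i j = 0 := hxQR.2
  set u : ι → K := Pi.single i₀ 1 with hu
  set v : ι → K := fun j => x i₀ j with hv
  have hxvmv : x = Matrix.vecMulVec u v := by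
    ext i j
    by_cases hi : i = i₀
    · subst hi; simp [Matrix.vecMulVec_apply, hu, hv]
    · simp [Matrix.vecMulVec_apply, hu, hv, Pi.single_apply, hi, hxR i j hi]
  have hvne : v ≠ 0 := by
    intro hveq
    apply hx0
    rw [hxvmv, hveq, vmv_zero_right]
  have hune : u ≠ 0 := by
    intro hueq
    have := congrFun hueq i₀
    simp [hu] at this
  set W1 : Submodule K (ι → K) :=
    Submodule.span K ({u} ∪ {y | ∃ a ∈ Q, a.mulVec u = y}) with hW1
  set W2 : Submodule K (ι → K) :=
    Submodule.span K ({v} ∪ {y | ∃ a ∈ Q, Matrix.vecMul v a = y}) with hW2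
  have hW1inv : ∀ a ∈ Q, ∀ w ∈ W1, a.mulVec w ∈ W1 := by
    intro a ha w hw
    induction hw using Submodule.span_induction with
    | mem y hy =>
      rcases hy with hy | ⟨b, hb, rfl⟩
      · rw [Set.mem_singleton_iff] at hy; subst hy
        exact Submodule.subset_span (Or.inr ⟨a, ha, rfl⟩)
      · rw [Matrix.mulVec_mulVec]
        exact Submodule.subset_span (Or.inr ⟨a * b, hmul a ha b hb, rfl⟩)
    | zero => rw [Matrix.mulVec_zero]; exact Submodule.zero_mem _
    | add y z _ _ hy hz => rw [Matrix.mulVec_add]; exact Submodule.add_mem _ hy hz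
    | smul c y _ hy => rw [Matrix.mulVec_smul]; exact Submodule.smul_mem _ _ hy
  have hW2inv : ∀ a ∈ Q, ∀ z ∈ W2, Matrix.vecMul z a ∈ W2 := by
    intro a ha z hz
    induction hz using Submodule.span_induction with
    | mem y hy =>
      rcases hy with hy | ⟨b, hb, rfl⟩
      · rw [Set.mem_singleton_iff] at hy; subst hy
        exact Submodule.subset_span (Or.inr ⟨a, ha, rfl⟩)
      · rw [Matrix.vecMul_vecMul]
        exact Submodule.subset_span (Or.inr ⟨b * a, hmul b hb a ha, rfl⟩)
    | zero => rw [Matrix.zero_vecMul]; exact Submodule.zero_mem _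
    | add y z _ _ hy hz => rw [Matrix.add_vecMul]; exact Submodule.add_mem _ hy hz
    | smul c y _ hy =>
      have hcv : (c • y) ᵥ* a = c • (y ᵥ* a) := by
        funext j
        simp [Matrix.vecMul, dotProduct, Finset.mul_sum, mul_assoc]
      rw [hcv]; exact Submodule.smul_mem _ _ hy
  by_cases hW1top : W1 = ⊤
  · by_cases hW2top : W2 = ⊤
    · -- Q = ⊤
      left
      rw [eq_top_iff]
      intro A _
      have key : ∀ w, ∀ z ∈ W2, Matrix.vecMulVec w z ∈ Q := by
        intro w
        have hwW1 : w ∈ W1 := by rw [hW1top]; trivial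
        induction hwW1 using Submodule.span_induction with
        | mem y hy =>
          intro z hz
          induction hz using Submodule.span_induction with
          | mem y' hy' =>
            rcases hy with hy | ⟨a, ha, rfl⟩ <;>
              rcases hy' with hy' | ⟨b, hb, rfl⟩
            · rw [Set.mem_singleton_iff] at hy hy'; subst hy; subst hy'
              rw [← hxvmv]; exact hxQ
            · rw [Set.mem_singleton_iff] at hy; subst hy
              rw [← vecMulVec_vecMul_right, ← hxvmv]; exact hmul x hxQ b hb
            · rw [Set.mem_singleton_iff] at hy'; subst hy'
              rw [← vecMulVec_mulVec_left, ← hxvmv]; exact hmul a ha x hxQ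
            · rw [← vecMulVec_mulVec_left, ← vecMulVec_vecMul_right, ← hxvmv]
              exact hmul a ha _ (hmul x hxQ b hb)
          | zero => rw [vmv_zero_right]; exact Submodule.zero_mem _
          | add y' z' _ _ h1 h2 =>
            rw [vmv_add_right]; exact Submodule.add_mem _ h1 h2
          | smul c y' _ h1 =>
            rw [vmv_smul_right]; exact Submodule.smul_mem _ _ h1
        | zero => intro z hz; rw [vmv_zero_left]; exact Submodule.zero_mem _
        | add y y' _ _ h1 h2 =>
          intro z hz
          rw [vmv_add_left]; exact Submodule.add_mem _ (h1 z hz) (h2 z hz)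
        | smul c y _ h1 =>
          intro z hz
          rw [vmv_smul_left]; exact Submodule.smul_mem _ _ (h1 z hz)
      rw [Matrix.matrix_eq_sum_single A]
      apply Submodule.sum_mem
      intro i _
      apply Submodule.sum_mem
      intro j _
      have h1 : Matrix.single i j (A i j) =
          (A i j) • Matrix.single i j (1 : K) := by
        rw [Matrix.smul_single, smul_eq_mul, mul_one]
      rw [h1]
      apply Submodule.smul_mem
      rw [stdBasisMatrix_eq_vecMulVec]
      exact key _ _ (by rw [hW2top]; trivial)
    · -- perp of W2
      right
      let Φ : (ι → K) →ₗ[K] (W2 →ₗ[K] K) :=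
        { toFun := fun w =>
            { toFun := fun z => dotProduct (z : ι → K) w
              map_add' := by intros; simp [add_dotProduct]
              map_smul' := by intros; simp [smul_dotProduct] }
          map_add' := by intros; ext z; simp [dotProduct_add]
          map_smul' := by intros; ext z; simp [dotProduct_smul] }
      have hmemker : ∀ w, w ∈ LinearMap.ker Φ ↔ ∀ z ∈ W2, dotProduct z w = 0 := by
        intro w
        constructor
        · intro h z hz
          have := congrFun (congrArg DFunLike.coe h) ⟨z, hz⟩
          simpa [Φ] using this
        · intro h
          rw [LinearMap.mem_ker]
          ext z
          simpa [Φ] using h z.1 z.2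
      refine ⟨LinearMap.ker Φ, ?_, ?_, ?_⟩
      · -- nonzero, by dimension count
        intro hbot
        have h1 := LinearMap.finrank_range_add_finrank_ker Φ
        rw [hbot] at h1
        simp only [finrank_bot, add_zero] at h1
        have h2 : finrank K ↥(LinearMap.range Φ) ≤ finrank K (W2 →ₗ[K] K) :=
          Submodule.finrank_le _
        have h3 : finrank K (W2 →ₗ[K] K) = finrank K W2 := Subspace.dual_finrank_eq
        have h4 : finrank K W2 < m := by
          have := Submodule.finrank_lt (K := K) hW2top
          rw [Module.finrank_pi] at this
          exact this
        rw [Module.finrank_pi] at h1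
        omega
      · -- not top
        intro htop
        apply hvne
        funext j
        have hj : (Pi.single j 1 : ι → K) ∈ LinearMap.ker Φ := by rw [htop]; trivial
        have := (hmemker _).1 hj v (Submodule.subset_span (Or.inl rfl))
        rwa [dotProduct_single, mul_one] at this
      · intro a ha w hw
        rw [hmemker] at hw ⊢
        intro z hz
        rw [Matrix.dotProduct_mulVec]
        exact hw _ (hW2inv a ha z hz)
  · -- W1 works
    right
    refine ⟨W1, ?_, hW1top, hW1inv⟩
    intro hbot
    apply hune
    have : u ∈ W1 := Submodule.subset_span (Or.inl rfl)
    rwa [hbot, Submodule.mem_bot] at this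
end Core

section Stab
variable {ι : Type*} [Fintype ι] [DecidableEq ι]

/-- conjugation by a unit, as a linear equivalence -/
def conjEquiv (g : (Matrix ι ι K)ˣ) : Matrix ι ι K ≃ₗ[K] Matrix ι ι K where
  toFun A := ↑(g⁻¹) * A * ↑g
  invFun A := ↑g * A * ↑(g⁻¹)
  map_add' := by intros; noncomm_ring
  map_smul' := by intros; simp [Matrix.mul_smul, Matrix.smul_mul]
  left_inv := by
    intro A
    have h : (↑g : Matrix ι ι K) * (↑(g⁻¹) : Matrix ι ι K) = 1 := by
      rw [← Units.val_mul, mul_inv_cancel, Units.val_one]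
    calc (↑g * (↑(g⁻¹) * A * ↑g) * ↑(g⁻¹) : Matrix ι ι K)
        = ((↑g : Matrix ι ι K) * ↑(g⁻¹)) * A * ((↑g : Matrix ι ι K) * ↑(g⁻¹)) := by
          noncomm_ring
      _ = A := by rw [h, one_mul, mul_one]
  right_inv := by
    intro A
    have h : (↑(g⁻¹) : Matrix ι ι K) * (↑g : Matrix ι ι K) = 1 := by
      rw [← Units.val_mul, inv_mul_cancel, Units.val_one]
    calc (↑(g⁻¹) * (↑g * A * ↑(g⁻¹)) * ↑g : Matrix ι ι K)
        = ((↑(g⁻¹) : Matrix ι ι K) * ↑g) * A * ((↑(g⁻¹) : Matrix ι ι K) * ↑g) := by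
          noncomm_ring
      _ = A := by rw [h, one_mul, mul_one]

lemma conjEquiv_apply (g : (Matrix ι ι K)ˣ) (A : Matrix ι ι K) :
    conjEquiv g A = (↑(g⁻¹) : Matrix ι ι K) * A * (↑g : Matrix ι ι K) := rfl

lemma conjEquiv_mul (g : (Matrix ι ι K)ˣ) (A B : Matrix ι ι K) :
    conjEquiv g (A * B) = conjEquiv g A * conjEquiv g B := by
  have h : (↑g : Matrix ι ι K) * (↑(g⁻¹) : Matrix ι ι K) = 1 := by
    rw [← Units.val_mul, mul_inv_cancel, Units.val_one]
  simp only [conjEquiv_apply]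
  calc (↑(g⁻¹) * (A * B) * ↑g : Matrix ι ι K)
      = (↑(g⁻¹) : Matrix ι ι K) * A * ((↑g : Matrix ι ι K) * ↑(g⁻¹)) * B * ↑g := by
        rw [h]; noncomm_ring
    _ = (↑(g⁻¹) * A * ↑g) * ((↑(g⁻¹) : Matrix ι ι K) * B * ↑g) := by noncomm_ring

/-- adapting a basis to an invariant subspace: there is a conjugation carrying a
subspace-invariant family into the coordinate stabilizer pattern -/
lemma stab_bound (Q : Submodule K (Matrix ι ι K)) (W : Submodule K (ι → K))
    (hinv : ∀ a ∈ Q, ∀ w ∈ W, a.mulVec w ∈ W) (s : Finset ι)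
    (hs : s.card = finrank K W) :
    ∃ g : (Matrix ι ι K)ˣ, ∀ A ∈ Q, ∀ j ∈ s, ∀ i ∉ s,
      ((↑(g⁻¹) : Matrix ι ι K) * A * (↑g : Matrix ι ι K)) i j = 0 := by
  classical
  obtain ⟨W', hcompl⟩ := Submodule.exists_isCompl W
  have hdims : finrank K W + finrank K W' = Fintype.card ι := by
    have := Submodule.finrank_add_eq_of_isCompl hcompl
    rwa [Module.finrank_pi] at this
  have hcards : (sᶜ : Finset ι).card = finrank K W' := by
    rw [Finset.card_compl]
    omega
  let eS : ↥s ≃ Fin (finrank K W) := s.equivFin.trans (finCongr hs)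
  let eS' : {i : ι // i ∉ s} ≃ Fin (finrank K W') :=
    ((Equiv.subtypeEquivRight (fun i => (Finset.mem_compl).symm)).trans
      (sᶜ).equivFin).trans (finCongr hcards)
  let bW : Module.Basis ↥s K W := (Module.finBasis K W).reindex eS.symm
  let bW' : Module.Basis {i : ι // i ∉ s} K W' := (Module.finBasis K W').reindex eS'.symm
  let c : Module.Basis ι K (ι → K) :=
    ((bW.prod bW').map (Submodule.prodEquivOfIsCompl W W' hcompl)).reindex
      (Equiv.sumCompl (· ∈ s))
  have hcW : ∀ (i : ι) (hi : i ∈ s), (c i : ι → K) ∈ W := by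
    intro i hi
    have : c i = Submodule.prodEquivOfIsCompl W W' hcompl ((bW.prod bW')
        ((Equiv.sumCompl (· ∈ s)).symm i)) := by
      simp [c, Module.Basis.reindex_apply, Module.Basis.map_apply]
    rw [this]
    have hsymm : (Equiv.sumCompl (· ∈ s)).symm i = Sum.inl ⟨i, hi⟩ := by
      simp [Equiv.sumCompl_symm_apply_of_pos, hi]
    rw [hsymm]
    have : (bW.prod bW') (Sum.inl ⟨i, hi⟩) = (bW ⟨i, hi⟩, 0) := by
      apply Prod.ext
      · rw [Module.Basis.prod_apply_inl_fst]
      · rw [Module.Basis.prod_apply_inl_snd]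
    rw [this]
    simp [Submodule.coe_prodEquivOfIsCompl]
  have hcWspan : W ≤ Submodule.span K {y : ι → K | ∃ (i : ι) (hi : i ∈ s), (c i : ι → K) = y} := by
    intro w hw
    -- w = subtype image of an element of W, expand in basis bW
    have hrepr : (⟨w, hw⟩ : W) = ∑ i : ↥s, (bW.repr ⟨w, hw⟩ i) • bW i := by
      exact (Module.Basis.sum_repr bW ⟨w, hw⟩).symm
    have : w = ∑ i : ↥s, (bW.repr ⟨w, hw⟩ i) • (bW i : ι → K) := by
      have := congrArg (Submodule.subtype W) hrepr
      simpa using this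
    rw [this]
    apply Submodule.sum_mem
    intro i _
    apply Submodule.smul_mem
    apply Submodule.subset_span
    refine ⟨i.1, i.2, ?_⟩
    have : c i.1 = Submodule.prodEquivOfIsCompl W W' hcompl ((bW.prod bW')
        ((Equiv.sumCompl (· ∈ s)).symm i.1)) := by
      simp [c, Module.Basis.reindex_apply, Module.Basis.map_apply]
    rw [this]
    have hsymm : (Equiv.sumCompl (· ∈ s)).symm i.1 = Sum.inl ⟨i.1, i.2⟩ := by
      simp [Equiv.sumCompl_symm_apply_of_pos, i.2]
    rw [hsymm]
    have h2 : (bW.prod bW') (Sum.inl ⟨i.1, i.2⟩) = (bW ⟨i.1, i.2⟩, 0) := by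
      apply Prod.ext
      · rw [Module.Basis.prod_apply_inl_fst]
      · rw [Module.Basis.prod_apply_inl_snd]
    rw [h2]
    simp [Submodule.coe_prodEquivOfIsCompl]
  -- the change of basis matrix
  let gmat : Matrix ι ι K := (Pi.basisFun K ι).toMatrix c
  haveI hInvg : Invertible gmat := (Pi.basisFun K ι).invertibleToMatrix c
  let g : (Matrix ι ι K)ˣ := unitOfInvertible gmat
  have hgcol : ∀ j : ι, gmat.mulVec (Pi.single j 1) = (c j : ι → K) := by
    intro j
    funext i
    rw [Matrix.mulVec_single]
    simp [gmat, Module.Basis.toMatrix_apply]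
  refine ⟨g, ?_⟩
  intro A hA j hj i hi
  -- the subspace of vectors supported on s
  set Es : Submodule K (ι → K) :=
    Submodule.span K {y : ι → K | ∃ (r : ι) (_ : r ∈ s), Pi.single r (1:K) = y} with hEs
  have hEsmem : ∀ y ∈ Es, ∀ r, r ∉ s → y r = 0 := by
    intro y hy
    induction hy using Submodule.span_induction with
    | mem y hy' =>
      obtain ⟨r', hr', rfl⟩ := hy'
      intro r hr
      have : r' ≠ r := fun h => hr (h ▸ hr')
      simp [Pi.single_apply, this.symm]
    | zero => intro r _; rfl
    | add y z _ _ hy hz => intro r hr; simp [hy r hr, hz r hr]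
    | smul c y _ hy => intro r hr; simp [hy r hr]
  -- W ⊆ g ∙ Es
  have hWg : W ≤ Submodule.map (Matrix.mulVecLin gmat) Es := by
    refine le_trans hcWspan ?_
    rw [Submodule.span_le]
    rintro - ⟨r, hr, rfl⟩
    refine ⟨Pi.single r 1, ?_, ?_⟩
    · exact Submodule.subset_span ⟨r, hr, rfl⟩
    · rw [Matrix.mulVecLin_apply, hgcol]
  -- now compute
  have hAcol : ((↑(g⁻¹) : Matrix ι ι K) * A * (↑g : Matrix ι ι K)).mulVec (Pi.single j 1) ∈ Es := by
    have h1 : ((↑(g⁻¹) : Matrix ι ι K) * A * (↑g : Matrix ι ι K)).mulVec (Pi.single j 1)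
        = (↑(g⁻¹) : Matrix ι ι K).mulVec (A.mulVec (gmat.mulVec (Pi.single j 1))) := by
      rw [← Matrix.mulVec_mulVec, ← Matrix.mulVec_mulVec]
      rfl
    rw [h1, hgcol]
    have h2 : A.mulVec (c j : ι → K) ∈ W := hinv A hA _ (hcW j hj)
    obtain ⟨e, heEs, hee⟩ := hWg h2
    rw [Matrix.mulVecLin_apply] at hee
    rw [← hee, Matrix.mulVec_mulVec]
    have hgg : ((↑(g⁻¹) : Matrix ι ι K) * gmat : Matrix ι ι K) = 1 := by
      have h2' : (↑(g⁻¹) : Matrix ι ι K) * (↑g : Matrix ι ι K) = 1 := by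
        rw [← Units.val_mul, inv_mul_cancel, Units.val_one]
      exact h2'
    rw [hgg, Matrix.one_mulVec]
    exact heEs
  have := hEsmem _ hAcol i hi
  rw [Matrix.mulVec_single] at this
  simpa using this

end Stab

section LL
variable {ι : Type*} [Fintype ι] [DecidableEq ι]

def stabSub (K : Type*) [Field K] (s : Finset ι) : Submodule K (Matrix ι ι K) :=
  suppSub K (fun i j => i ∉ s ∧ j ∈ s)

lemma finrank_stabSub (s : Finset ι) :
    finrank K (stabSub K s) =
      Fintype.card ι * Fintype.card ι - (Fintype.card ι - s.card) * s.card := by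
  rw [stabSub, finrank_suppSub]
  have h1 : Fintype.card {p : ι × ι // ¬ (p.1 ∉ s ∧ p.2 ∈ s)}
      = Fintype.card (ι × ι) - Fintype.card {p : ι × ι // (p.1 ∉ s ∧ p.2 ∈ s)} :=
    Fintype.card_subtype_compl _
  have e : {p : ι × ι // p.1 ∉ s ∧ p.2 ∈ s} ≃ ({i : ι // i ∉ s} × {j : ι // j ∈ s}) :=
    Equiv.subtypeProdEquivProd (p := fun i : ι => i ∉ s) (q := fun j : ι => j ∈ s)
  rw [h1, Fintype.card_congr e]
  have h2 : Fintype.card {i : ι // i ∉ s} = Fintype.card ι - s.card := by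
    rw [Fintype.card_subtype_compl]
    congr 1
    exact Fintype.card_coe s
  have h3 : Fintype.card {j : ι // j ∈ s} = s.card := Fintype.card_coe s
  rw [Fintype.card_prod, Fintype.card_prod, h2, h3]

lemma prod_lower (m k : ℕ) (h1 : 0 < k) (h2 : k < m) : m - 1 ≤ (m - k) * k := by
  obtain ⟨a, rfl⟩ : ∃ a, k = a + 1 := ⟨k - 1, by omega⟩
  obtain ⟨b, rfl⟩ : ∃ b, m = (a + 1) + b + 1 := ⟨m - (a+1) - 1, by omega⟩
  have h3 : (a + 1) + b + 1 - (a + 1) = b + 1 := by omega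
  rw [h3]
  have h4 : (b + 1) * (a + 1) = b * a + b + a + 1 := by ring
  omega

lemma L0 [Nonempty ι] (Q : Submodule K (Matrix ι ι K))
    (hmul : ∀ a ∈ Q, ∀ b ∈ Q, a * b ∈ Q) (hne : Q ≠ ⊤) :
    finrank K Q ≤ Fintype.card ι * Fintype.card ι - Fintype.card ι + 1 := by
  classical
  set m := Fintype.card ι with hm
  by_contra hlt
  push_neg at hlt
  rcases core_lemma Q hmul (by rw [← hm]; omega) with h | ⟨W, hW0, hWT, hinv⟩
  · exact hne h
  set k := finrank K W with hk
  have hk1 : 0 < k := by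
    by_contra h
    push_neg at h
    have h0 : finrank K W = 0 := by omega
    exact hW0 (Submodule.finrank_eq_zero.mp h0)
  have hk2 : k < m := by
    have := Submodule.finrank_lt (K := K) hWT
    rwa [Module.finrank_pi] at this
  obtain ⟨s, -, hs⟩ := Finset.exists_subset_card_eq (s := (Finset.univ : Finset ι))
    (show k ≤ Finset.univ.card by rw [Finset.card_univ]; omega)
  obtain ⟨g, hg⟩ := stab_bound Q W hinv s (hs.trans hk)
  have hle : Submodule.map (((conjEquiv g) : Matrix ι ι K ≃ₗ[K] Matrix ι ι K) : Matrix ι ι K →ₗ[K] Matrix ι ι K) Q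
      ≤ stabSub K s := by
    rintro - ⟨A, hA, rfl⟩
    intro i j hij
    exact hg A hA j hij.2 i hij.1
  have hrank : finrank K (Submodule.map (((conjEquiv g) : Matrix ι ι K ≃ₗ[K] Matrix ι ι K) : Matrix ι ι K →ₗ[K] Matrix ι ι K) Q)
      = finrank K Q := LinearEquiv.finrank_map_eq _ _
  have hmono := Submodule.finrank_mono hle
  rw [hrank, finrank_stabSub, hs] at hmono
  rw [← hm] at hmono
  have hlow := prod_lower m k hk1 hk2
  have hub : (m - k) * k ≤ m * m := by
    apply Nat.mul_le_mul <;> omega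
  omega

lemma L_classify [Nonempty ι] (Q : Submodule K (Matrix ι ι K))
    (hmul : ∀ a ∈ Q, ∀ b ∈ Q, a * b ∈ Q) (hne : Q ≠ ⊤)
    (hq : finrank K Q = Fintype.card ι * Fintype.card ι - Fintype.card ι + 1)
    (hm2 : 2 ≤ Fintype.card ι) (i₀ i₁ : ι) :
    ∃ g : (Matrix ι ι K)ˣ,
      ((fun A => (↑(g⁻¹) : Matrix ι ι K) * A * (↑g : Matrix ι ι K)) '' (Q : Set (Matrix ι ι K))
         = {X : Matrix ι ι K | ∀ i, i ≠ i₀ → X i i₀ = 0}) ∨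
      ((fun A => (↑(g⁻¹) : Matrix ι ι K) * A * (↑g : Matrix ι ι K)) '' (Q : Set (Matrix ι ι K))
         = {X : Matrix ι ι K | ∀ j, j ≠ i₁ → X i₁ j = 0}) := by
  classical
  set m := Fintype.card ι with hm
  rcases core_lemma Q hmul (le_of_eq hq.symm) with h | ⟨W, hW0, hWT, hinv⟩
  · exact absurd h hne
  set k := finrank K W with hk
  have hk1 : 0 < k := by
    by_contra h
    push_neg at h
    have h0 : finrank K W = 0 := by omega
    exact hW0 (Submodule.finrank_eq_zero.mp h0)
  have hk2 : k < m := by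
    have := Submodule.finrank_lt (K := K) hWT
    rwa [Module.finrank_pi] at this
  -- first, bound with an arbitrary subset to pin down k
  have hkval : k = 1 ∨ k = m - 1 := by
    obtain ⟨s, -, hs⟩ := Finset.exists_subset_card_eq (s := (Finset.univ : Finset ι))
      (show k ≤ Finset.univ.card by rw [Finset.card_univ]; omega)
    obtain ⟨g, hg⟩ := stab_bound Q W hinv s (hs.trans hk)
    have hle : Submodule.map (((conjEquiv g) : Matrix ι ι K ≃ₗ[K] Matrix ι ι K) : Matrix ι ι K →ₗ[K] Matrix ι ι K) Q
        ≤ stabSub K s := by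
      rintro - ⟨A, hA, rfl⟩
      intro i j hij
      exact hg A hA j hij.2 i hij.1
    have hrank : finrank K (Submodule.map (((conjEquiv g) : Matrix ι ι K ≃ₗ[K] Matrix ι ι K) : Matrix ι ι K →ₗ[K] Matrix ι ι K) Q)
        = finrank K Q := LinearEquiv.finrank_map_eq _ _
    have hmono := Submodule.finrank_mono hle
    rw [hrank, finrank_stabSub, hs, hq] at hmono
    rw [← hm] at hmono
    have hub : (m - k) * k ≤ m * m := by
      apply Nat.mul_le_mul <;> omega
    -- so (m-k)*k ≤ m - 1
    by_contra hcon
    push_neg at hcon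
    have h2k : 2 ≤ k := by omega
    have h2mk : 2 ≤ m - k := by omega
    have e1 : 2 * k ≤ (m - k) * k := Nat.mul_le_mul_right k h2mk
    have e2 : (m - k) * 2 ≤ (m - k) * k := Nat.mul_le_mul_left (m - k) h2k
    omega
  -- choose the normalized subset
  rcases hkval with hk1' | hk1'
  · -- column type, s = {i₀}
    have hs : ({i₀} : Finset ι).card = finrank K W := by
      rw [Finset.card_singleton]; omega
    obtain ⟨g, hg⟩ := stab_bound Q W hinv {i₀} hs
    refine ⟨g, Or.inl ?_⟩
    have hle : Submodule.map (((conjEquiv g) : Matrix ι ι K ≃ₗ[K] Matrix ι ι K) : Matrix ι ι K →ₗ[K] Matrix ι ι K) Q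
        ≤ stabSub K {i₀} := by
      rintro - ⟨A, hA, rfl⟩
      intro i j hij
      exact hg A hA j hij.2 i hij.1
    have hrank : finrank K (Submodule.map (((conjEquiv g) : Matrix ι ι K ≃ₗ[K] Matrix ι ι K) : Matrix ι ι K →ₗ[K] Matrix ι ι K) Q)
        = finrank K Q := LinearEquiv.finrank_map_eq _ _
    have heq : Submodule.map (((conjEquiv g) : Matrix ι ι K ≃ₗ[K] Matrix ι ι K) : Matrix ι ι K →ₗ[K] Matrix ι ι K) Q
        = stabSub K {i₀} := by
      apply Submodule.eq_of_le_of_finrank_eq hle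
      rw [hrank, hq, finrank_stabSub, Finset.card_singleton, ← hm]
      have hmm' : m ≤ m * m := Nat.le_mul_of_pos_left m (by omega)
      omega
    have hsets := congrArg (fun (p : Submodule K (Matrix ι ι K)) => (p : Set (Matrix ι ι K))) heq
    simp only [Submodule.map_coe, LinearEquiv.coe_coe] at hsets
    rw [show ⇑((conjEquiv g) : Matrix ι ι K ≃ₗ[K] Matrix ι ι K)
        = (fun A => (↑(g⁻¹) : Matrix ι ι K) * A * (↑g : Matrix ι ι K)) from rfl] at hsets
    rw [hsets]
    ext X
    constructor
    · intro hX i hi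
      exact hX i i₀ ⟨by simpa using hi, by simp⟩
    · intro hX i j hij
      have : j = i₀ := by simpa using hij.2
      subst this
      exact hX i (by simpa using hij.1)
  · -- row type, s = {i₁}ᶜ
    have hs : (({i₁} : Finset ι)ᶜ).card = finrank K W := by
      rw [Finset.card_compl, Finset.card_singleton]; omega
    obtain ⟨g, hg⟩ := stab_bound Q W hinv ({i₁} : Finset ι)ᶜ hs
    refine ⟨g, Or.inr ?_⟩
    have hle : Submodule.map (((conjEquiv g) : Matrix ι ι K ≃ₗ[K] Matrix ι ι K) : Matrix ι ι K →ₗ[K] Matrix ι ι K) Q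
        ≤ stabSub K ({i₁} : Finset ι)ᶜ := by
      rintro - ⟨A, hA, rfl⟩
      intro i j hij
      exact hg A hA j hij.2 i hij.1
    have hrank : finrank K (Submodule.map (((conjEquiv g) : Matrix ι ι K ≃ₗ[K] Matrix ι ι K) : Matrix ι ι K →ₗ[K] Matrix ι ι K) Q)
        = finrank K Q := LinearEquiv.finrank_map_eq _ _
    have heq : Submodule.map (((conjEquiv g) : Matrix ι ι K ≃ₗ[K] Matrix ι ι K) : Matrix ι ι K →ₗ[K] Matrix ι ι K) Q
        = stabSub K ({i₁} : Finset ι)ᶜ := by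
      apply Submodule.eq_of_le_of_finrank_eq hle
      rw [hrank, hq, finrank_stabSub, Finset.card_compl, Finset.card_singleton, ← hm]
      have h5 : m - (m - 1) = 1 := by omega
      rw [h5]
      have hmm' : m ≤ m * m := Nat.le_mul_of_pos_left m (by omega)
      omega
    have hsets := congrArg (fun (p : Submodule K (Matrix ι ι K)) => (p : Set (Matrix ι ι K))) heq
    simp only [Submodule.map_coe, LinearEquiv.coe_coe] at hsets
    rw [show ⇑((conjEquiv g) : Matrix ι ι K ≃ₗ[K] Matrix ι ι K)
        = (fun A => (↑(g⁻¹) : Matrix ι ι K) * A * (↑g : Matrix ι ι K)) from rfl] at hsets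
    rw [hsets]
    ext X
    constructor
    · intro hX j hj
      exact hX i₁ j ⟨by simp, by simpa using hj⟩
    · intro hX i j hij
      have hii : i = i₁ := by simpa using hij.1
      subst hii
      exact hX j (by simpa using hij.2)

end LL

section Emb
variable {n : ℕ} (ℓ : Fin n)

/-- embed a corner matrix as a block matrix with a 1 in the (ℓ,ℓ) spot -/
def emb (X : Matrix {i : Fin n // i ≠ ℓ} {i : Fin n // i ≠ ℓ} K) :
    Matrix (Fin n) (Fin n) K :=
  Matrix.of fun i j =>
    if hi : i = ℓ then (if j = ℓ then 1 else 0)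
    else (if hj : j = ℓ then 0 else X ⟨i, hi⟩ ⟨j, hj⟩)

lemma emb_apply_corner (X : Matrix {i : Fin n // i ≠ ℓ} {i : Fin n // i ≠ ℓ} K)
    (i j : {i : Fin n // i ≠ ℓ}) : emb ℓ X i.1 j.1 = X i j := by
  simp [emb, i.2, j.2]

lemma emb_apply_row (X : Matrix {i : Fin n // i ≠ ℓ} {i : Fin n // i ≠ ℓ} K)
    (j : Fin n) : emb ℓ X ℓ j = if j = ℓ then 1 else 0 := by
  simp [emb]

lemma emb_apply_col (X : Matrix {i : Fin n // i ≠ ℓ} {i : Fin n // i ≠ ℓ} K)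
    (i : Fin n) : emb ℓ X i ℓ = if i = ℓ then 1 else 0 := by
  by_cases hi : i = ℓ <;> simp [emb, hi]

lemma emb_one : emb ℓ (1 : Matrix {i : Fin n // i ≠ ℓ} {i : Fin n // i ≠ ℓ} K) = 1 := by
  ext i j
  by_cases hi : i = ℓ <;> by_cases hj : j = ℓ
  · subst hi; subst hj; simp [emb]
  · subst hi; simp [emb, Ne.symm hj, Matrix.one_apply, hj]
  · subst hj; simp [emb, hi, Matrix.one_apply, hi]
  · simp only [emb, Matrix.of_apply, dif_neg hi, dif_neg hj]
    rw [Matrix.one_apply, Matrix.one_apply]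
    have : (⟨i, hi⟩ : {i : Fin n // i ≠ ℓ}) = ⟨j, hj⟩ ↔ i = j := Subtype.ext_iff
    by_cases h : i = j <;> simp [h, this]

lemma emb_mul (X Y : Matrix {i : Fin n // i ≠ ℓ} {i : Fin n // i ≠ ℓ} K) :
    emb ℓ X * emb ℓ Y = emb ℓ (X * Y) := by
  ext i j
  rw [Matrix.mul_apply, sum_split ℓ]
  by_cases hi : i = ℓ
  · rw [hi]
    rw [Finset.sum_eq_zero, add_zero]
    · rw [emb_apply_row ℓ (X * Y) j, emb_apply_row ℓ Y j,
        show emb ℓ X ℓ ℓ = 1 from by rw [emb_apply_row]; simp, one_mul]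
    · intro k _
      rw [show emb ℓ X ℓ (k : Fin n) = if (k : Fin n) = ℓ then 1 else 0 from
        emb_apply_row ℓ X k]
      simp [k.2]
  · by_cases hj : j = ℓ
    · rw [hj]
      have h1 : emb ℓ X i ℓ = 0 := by rw [emb_apply_col]; simp [hi]
      have h2 : emb ℓ (X * Y) i ℓ = 0 := by rw [emb_apply_col]; simp [hi]
      rw [h1, h2, zero_mul, zero_add, Finset.sum_eq_zero]
      intro k _
      have : emb ℓ Y (k : Fin n) ℓ = 0 := by rw [emb_apply_col]; simp [k.2]
      rw [this, mul_zero]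
    · have h1 : emb ℓ X i ℓ = 0 := by rw [emb_apply_col]; simp [hi]
      rw [h1, zero_mul, zero_add]
      have h2 : emb ℓ (X * Y) i j = (X * Y) ⟨i, hi⟩ ⟨j, hj⟩ :=
        emb_apply_corner ℓ (X * Y) ⟨i, hi⟩ ⟨j, hj⟩
      rw [h2, Matrix.mul_apply]
      apply Finset.sum_congr rfl
      intro k _
      rw [show emb ℓ X i (k : Fin n) = X ⟨i, hi⟩ k from emb_apply_corner ℓ X ⟨i, hi⟩ k,
        show emb ℓ Y (k : Fin n) j = Y k ⟨j, hj⟩ from emb_apply_corner ℓ Y k ⟨j, hj⟩]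

/-- the embedded unit -/
def embUnit (g : (Matrix {i : Fin n // i ≠ ℓ} {i : Fin n // i ≠ ℓ} K)ˣ) :
    (Matrix (Fin n) (Fin n) K)ˣ where
  val := emb ℓ (↑g : Matrix _ _ K)
  inv := emb ℓ (↑(g⁻¹) : Matrix _ _ K)
  val_inv := by rw [emb_mul, ← Units.val_mul, mul_inv_cancel, Units.val_one, emb_one]
  inv_val := by rw [emb_mul, ← Units.val_mul, inv_mul_cancel, Units.val_one, emb_one]

end Emb

section EmbConj
variable {n : ℕ} (ℓ : Fin n)

/-- compression to the corner -/
def cpr (A : Matrix (Fin n) (Fin n) K) :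
    Matrix {i : Fin n // i ≠ ℓ} {i : Fin n // i ≠ ℓ} K :=
  Matrix.of fun i j => A i.1 j.1

lemma mul_emb_row (X : Matrix {i : Fin n // i ≠ ℓ} {i : Fin n // i ≠ ℓ} K)
    (A : Matrix (Fin n) (Fin n) K) (p : Fin n) :
    (emb ℓ X * A) ℓ p = A ℓ p := by
  rw [Matrix.mul_apply, sum_split ℓ]
  rw [show emb ℓ X ℓ ℓ = 1 from by rw [emb_apply_row]; simp, one_mul]
  rw [Finset.sum_eq_zero, add_zero]
  intro k _
  rw [show emb ℓ X ℓ (k : Fin n) = if (k : Fin n) = ℓ then 1 else 0 from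
    emb_apply_row ℓ X k]
  simp [k.2]

lemma conj_row (X Y : Matrix {i : Fin n // i ≠ ℓ} {i : Fin n // i ≠ ℓ} K)
    (A : Matrix (Fin n) (Fin n) K) (hA : ∀ j, j ≠ ℓ → A ℓ j = 0)
    (j : Fin n) (hj : j ≠ ℓ) : (emb ℓ X * A * emb ℓ Y) ℓ j = 0 := by
  rw [Matrix.mul_apply]
  apply Finset.sum_eq_zero
  intro p _
  rw [mul_emb_row]
  by_cases hp : p = ℓ
  · rw [hp, show emb ℓ Y ℓ j = if j = ℓ then 1 else 0 from emb_apply_row ℓ Y j]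
    simp [hj]
  · rw [hA p hp, zero_mul]

lemma conj_corner (X Y : Matrix {i : Fin n // i ≠ ℓ} {i : Fin n // i ≠ ℓ} K)
    (A : Matrix (Fin n) (Fin n) K) (i j : {i : Fin n // i ≠ ℓ}) :
    (emb ℓ X * A * emb ℓ Y) i.1 j.1 = (X * cpr ℓ A * Y) i j := by
  rw [Matrix.mul_apply (M := emb ℓ X * A), sum_split ℓ]
  have h0 : emb ℓ Y ℓ j.1 = 0 := by
    rw [show emb ℓ Y ℓ j.1 = if j.1 = ℓ then 1 else 0 from emb_apply_row ℓ Y j.1]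
    simp [j.2]
  rw [h0, mul_zero, zero_add]
  rw [Matrix.mul_apply (M := X * cpr ℓ A)]
  apply Finset.sum_congr rfl
  intro p _
  congr 1
  · rw [Matrix.mul_apply, sum_split ℓ]
    have h1 : emb ℓ X i.1 ℓ = 0 := by rw [emb_apply_col]; simp [i.2]
    rw [h1, zero_mul, zero_add, Matrix.mul_apply]
    apply Finset.sum_congr rfl
    intro k _
    rw [emb_apply_corner ℓ X i k]
    rfl
  · exact emb_apply_corner ℓ Y p j

end EmbConj

section Targets
variable {n : ℕ} (ℓ : Fin n)

lemma mul_std_apply (M : Matrix (Fin n) (Fin n) K) (i j : Fin n) :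
    (M * Matrix.single ℓ ℓ (1 : K)) i j = if j = ℓ then M i ℓ else 0 := by
  rw [Matrix.mul_apply]
  by_cases hj : j = ℓ
  · rw [if_pos hj, hj]
    rw [Finset.sum_eq_single ℓ]
    · simp [Matrix.single]
    · intro k _ hk; simp [Matrix.single, Ne.symm hk]
    · simp
  · rw [if_neg hj]
    apply Finset.sum_eq_zero
    intro k _
    simp [Matrix.single, hj, Ne.symm hj]

lemma std_apply (z : Fin n) (c : K) (i j : Fin n) :
    (c • Matrix.single z z (1 : K)) i j
      = if i = z ∧ j = z then c else 0 := by
  by_cases h : i = z ∧ j = z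
  · obtain ⟨h1, h2⟩ := h; subst h1; subst h2; simp [Matrix.single]
  · rw [if_neg h]
    have : ¬ (z = i ∧ z = j) := fun hc => h ⟨hc.1.symm, hc.2.symm⟩
    simp [Matrix.single, this]

open Pointwise in
lemma targetset1 (z : Fin n) (hz : z ≠ ℓ) :
    (Set.range fun M : Matrix (Fin n) (Fin n) K => M * Matrix.single ℓ ℓ (1 : K))
      + {A : Matrix (Fin n) (Fin n) K | (∀ j, A ℓ j = 0) ∧ (∀ i, A i z = 0)}
      + (Set.range fun c : K => c • Matrix.single z z (1 : K))
    = {A : Matrix (Fin n) (Fin n) K | (∀ j, j ≠ ℓ → A ℓ j = 0) ∧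
        (∀ i, i ≠ z → A i z = 0)} := by
  ext A
  simp only [Set.mem_add, Set.mem_range, Set.mem_setOf_eq]
  constructor
  · rintro ⟨u, ⟨x, ⟨M, rfl⟩, P, hP, rfl⟩, e, ⟨c, rfl⟩, rfl⟩
    constructor
    · intro j hj
      simp only [Matrix.add_apply]
      rw [mul_std_apply, if_neg hj, hP.1 j, std_apply]
      have : ¬ (ℓ = z ∧ j = z) := fun hc => hz hc.1.symm
      rw [if_neg this]
      ring
    · intro i hi
      simp only [Matrix.add_apply]
      rw [mul_std_apply, if_neg hz, hP.2 i, std_apply]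
      rw [if_neg (fun hc => hi hc.1)]
      ring
  · rintro ⟨h1, h2⟩
    refine ⟨A * Matrix.single ℓ ℓ (1 : K)
        + (A - A * Matrix.single ℓ ℓ (1 : K) - (A z z) • Matrix.single z z (1 : K)),
      ⟨A * Matrix.single ℓ ℓ (1 : K), ⟨A, rfl⟩,
        A - A * Matrix.single ℓ ℓ (1 : K) - (A z z) • Matrix.single z z (1 : K),
        ⟨?_, ?_⟩, rfl⟩,
      (A z z) • Matrix.single z z (1 : K), ⟨A z z, rfl⟩, by abel⟩
    · intro j
      simp only [Matrix.sub_apply]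
      rw [mul_std_apply, std_apply]
      by_cases hj : j = ℓ
      · rw [if_pos hj, hj, if_neg (fun hc => hz hc.1.symm)]
        ring
      · rw [if_neg hj, h1 j hj, if_neg (fun hc => hz (hc.1.symm))]
        ring
    · intro i
      simp only [Matrix.sub_apply]
      rw [mul_std_apply, if_neg hz, std_apply]
      by_cases hi : i = z
      · rw [if_pos ⟨hi, rfl⟩, hi]
        ring
      · rw [if_neg (fun hc => hi hc.1), h2 i hi]
        ring

open Pointwise in
lemma targetset2 (z : Fin n) (hz : z ≠ ℓ) :
    (Set.range fun M : Matrix (Fin n) (Fin n) K => M * Matrix.single ℓ ℓ (1 : K))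
      + {A : Matrix (Fin n) (Fin n) K | (∀ j, A ℓ j = 0) ∧ (∀ j, A z j = 0)}
      + (Set.range fun c : K => c • Matrix.single z z (1 : K))
    = {A : Matrix (Fin n) (Fin n) K | (∀ j, j ≠ ℓ → A ℓ j = 0) ∧
        (∀ j, j ≠ z → j ≠ ℓ → A z j = 0)} := by
  ext A
  simp only [Set.mem_add, Set.mem_range, Set.mem_setOf_eq]
  constructor
  · rintro ⟨u, ⟨x, ⟨M, rfl⟩, P, hP, rfl⟩, e, ⟨c, rfl⟩, rfl⟩
    constructor
    · intro j hj
      simp only [Matrix.add_apply]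
      rw [mul_std_apply, if_neg hj, hP.1 j, std_apply]
      rw [if_neg (fun hc => hz hc.1.symm)]
      ring
    · intro j hjz hjl
      simp only [Matrix.add_apply]
      rw [mul_std_apply, if_neg hjl, hP.2 j, std_apply]
      rw [if_neg (fun hc => hjz hc.2)]
      ring
  · rintro ⟨h1, h2⟩
    refine ⟨A * Matrix.single ℓ ℓ (1 : K)
        + (A - A * Matrix.single ℓ ℓ (1 : K) - (A z z) • Matrix.single z z (1 : K)),
      ⟨A * Matrix.single ℓ ℓ (1 : K), ⟨A, rfl⟩,
        A - A * Matrix.single ℓ ℓ (1 : K) - (A z z) • Matrix.single z z (1 : K),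
        ⟨?_, ?_⟩, rfl⟩,
      (A z z) • Matrix.single z z (1 : K), ⟨A z z, rfl⟩, by abel⟩
    · intro j
      simp only [Matrix.sub_apply]
      rw [mul_std_apply, std_apply]
      by_cases hj : j = ℓ
      · rw [if_pos hj, hj, if_neg (fun hc => hz hc.1.symm)]
        ring
      · rw [if_neg hj, h1 j hj, if_neg (fun hc => hz hc.1.symm)]
        ring
    · intro j
      simp only [Matrix.sub_apply]
      rw [mul_std_apply, std_apply]
      by_cases hj : j = ℓ
      · rw [if_pos hj, hj, if_neg (fun hc => hz hc.2.symm)]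
        ring
      · rw [if_neg hj]
        by_cases hjz : j = z
        · rw [if_pos ⟨rfl, hjz⟩, hjz]
          ring
        · rw [if_neg (fun hc => hjz hc.2), h2 j hjz hj]
          ring

end Targets

section Main
variable {t : ℕ}

set_option maxHeartbeats 1600000 in
lemma main_core (ℓ : Fin (t + 3))
    (B : NonUnitalSubalgebra K (Matrix (Fin (t + 3)) (Fin (t + 3)) K))
    (hBP : ∀ A ∈ B, ∀ j, j ≠ ℓ → A ℓ j = 0)
    (hBR : (B : Set (Matrix (Fin (t + 3)) (Fin (t + 3)) K)) ≠ {A | ∀ j, A ℓ j = 0})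
    (hdim : finrank K B.toSubmodule = t * t + 4 * t + 6)
    (i₀ i₁ : {i : Fin (t + 3) // i ≠ ℓ}) :
    ∃ g : (Matrix {i : Fin (t + 3) // i ≠ ℓ} {i : Fin (t + 3) // i ≠ ℓ} K)ˣ,
      ((fun M => emb ℓ (↑(g⁻¹) : Matrix _ _ K) * M * emb ℓ (↑g : Matrix _ _ K)) ''
          (B : Set (Matrix (Fin (t + 3)) (Fin (t + 3)) K))
        = {A : Matrix (Fin (t + 3)) (Fin (t + 3)) K |
            (∀ j, j ≠ ℓ → A ℓ j = 0) ∧ (∀ i, i ≠ i₀.1 → A i i₀.1 = 0)}) ∨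
      ((fun M => emb ℓ (↑(g⁻¹) : Matrix _ _ K) * M * emb ℓ (↑g : Matrix _ _ K)) ''
          (B : Set (Matrix (Fin (t + 3)) (Fin (t + 3)) K))
        = {A : Matrix (Fin (t + 3)) (Fin (t + 3)) K |
            (∀ j, j ≠ ℓ → A ℓ j = 0) ∧ (∀ j, j ≠ i₁.1 → j ≠ ℓ → A i₁.1 j = 0)}) := by
  classical
  have hcard : Fintype.card {i : Fin (t + 3) // i ≠ ℓ} = t + 2 := by
    have h1 : Fintype.card {i : Fin (t + 3) // i ≠ ℓ}
        = Fintype.card (Fin (t + 3)) - Fintype.card {i : Fin (t + 3) // i = ℓ} :=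
      Fintype.card_subtype_compl _
    rw [h1, Fintype.card_subtype_eq, Fintype.card_fin]
    omega
  haveI : Nonempty {i : Fin (t + 3) // i ≠ ℓ} := ⟨i₀⟩
  -- linear maps
  set μ : Matrix (Fin (t + 3)) (Fin (t + 3)) K →ₗ[K] K :=
    { toFun := fun A => A ℓ ℓ, map_add' := fun _ _ => rfl, map_smul' := fun _ _ => rfl }
    with hμdef
  set φ : Matrix (Fin (t + 3)) (Fin (t + 3)) K →ₗ[K]
      Matrix {i : Fin (t + 3) // i ≠ ℓ} {i : Fin (t + 3) // i ≠ ℓ} K :=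
    { toFun := fun A => cpr ℓ A, map_add' := fun _ _ => rfl, map_smul' := fun _ _ => rfl }
    with hφdef
  set ψ : Matrix (Fin (t + 3)) (Fin (t + 3)) K →ₗ[K] ({i : Fin (t + 3) // i ≠ ℓ} → K) :=
    { toFun := fun A i => A i.1 ℓ, map_add' := fun _ _ => rfl, map_smul' := fun _ _ => rfl }
    with hψdef
  -- coordinate subspaces
  set rowZero : Submodule K (Matrix (Fin (t + 3)) (Fin (t + 3)) K) :=
    suppSub K (fun i _ => i = ℓ) with hrowZero
  set rowOff : Submodule K (Matrix (Fin (t + 3)) (Fin (t + 3)) K) :=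
    suppSub K (fun i j => i = ℓ ∧ j ≠ ℓ) with hrowOff
  set colSp : Submodule K (Matrix (Fin (t + 3)) (Fin (t + 3)) K) :=
    suppSub K (fun _ j => j ≠ ℓ) with hcolSp
  set colSp0 : Submodule K (Matrix (Fin (t + 3)) (Fin (t + 3)) K) :=
    suppSub K (fun i j => j ≠ ℓ ∨ i = ℓ) with hcolSp0
  have hMfull : finrank K (Matrix {i : Fin (t + 3) // i ≠ ℓ} {i : Fin (t + 3) // i ≠ ℓ} K)
      = (t + 2) * (t + 2) := by
    rw [Module.finrank_matrix, hcard, Module.finrank_self, mul_one]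
  have hrowZeroRank : finrank K rowZero = (t + 3) * (t + 3) - (t + 3) := by
    rw [hrowZero, finrank_suppSub]
    have h1 : Fintype.card {p : Fin (t + 3) × Fin (t + 3) // ¬ p.1 = ℓ}
        = Fintype.card (Fin (t + 3) × Fin (t + 3))
          - Fintype.card {p : Fin (t + 3) × Fin (t + 3) // p.1 = ℓ} :=
      Fintype.card_subtype_compl _
    have e : {p : Fin (t + 3) × Fin (t + 3) // p.1 = ℓ} ≃ Fin (t + 3) :=
      ⟨fun p => p.1.2, fun j => ⟨(ℓ, j), rfl⟩,
       fun p => by rcases p with ⟨⟨a, b⟩, h⟩; simp only at h; subst h; rfl,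
       fun j => rfl⟩
    rw [h1, Fintype.card_congr e, Fintype.card_prod, Fintype.card_fin]
  have hcolSpRank : finrank K colSp = t + 3 := by
    rw [hcolSp, finrank_suppSub]
    have e : {p : Fin (t + 3) × Fin (t + 3) // ¬ p.2 ≠ ℓ} ≃ Fin (t + 3) :=
      ⟨fun p => p.1.1, fun i => ⟨(i, ℓ), by simp⟩,
       fun p => by
        rcases p with ⟨⟨a, b⟩, h⟩
        simp only [ne_eq, not_not] at h
        subst h; rfl,
       fun i => rfl⟩
    rw [Fintype.card_congr e, Fintype.card_fin]
  have hcolSp0Rank : finrank K colSp0 = t + 2 := by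
    rw [hcolSp0, finrank_suppSub]
    have e : {p : Fin (t + 3) × Fin (t + 3) // ¬ (p.2 ≠ ℓ ∨ p.1 = ℓ)}
        ≃ {i : Fin (t + 3) // i ≠ ℓ} :=
      ⟨fun p => ⟨p.1.1, by have := p.2; push_neg at this; exact this.2⟩,
       fun i => ⟨(i.1, ℓ), by push_neg; exact ⟨rfl, i.2⟩⟩,
       fun p => by
        rcases p with ⟨⟨a, b⟩, h⟩
        push_neg at h
        have hb : b = ℓ := by simpa using h.1
        subst hb; rfl,
       fun i => rfl⟩
    rw [Fintype.card_congr e, hcard]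
  -- B0
  set B0 : Submodule K (Matrix (Fin (t + 3)) (Fin (t + 3)) K) :=
    B.toSubmodule ⊓ LinearMap.ker μ with hB0def
  have hB0row : ∀ a ∈ B0, ∀ j, a ℓ j = 0 := by
    intro a ha j
    by_cases hj : j = ℓ
    · rw [hj]
      exact ha.2
    · exact hBP a ha.1 j hj
  have hmulB0 : ∀ a ∈ B0, ∀ b ∈ B0, a * b ∈ B0 := by
    intro a ha b hb
    refine ⟨B.mul_mem ha.1 hb.1, ?_⟩
    show (a * b) ℓ ℓ = 0
    rw [Matrix.mul_apply]
    apply Finset.sum_eq_zero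
    intro k _
    rw [hB0row a ha k, zero_mul]
  set Q : Submodule K (Matrix {i : Fin (t + 3) // i ≠ ℓ} {i : Fin (t + 3) // i ≠ ℓ} K) :=
    Submodule.map φ B0 with hQdef
  have phimul : ∀ a b : Matrix (Fin (t + 3)) (Fin (t + 3)) K,
      (∀ j, b ℓ j = 0) → φ a * φ b = φ (a * b) := by
    intro a b hb
    ext i j
    rw [Matrix.mul_apply]
    show _ = (a * b) i.1 j.1
    rw [Matrix.mul_apply, sum_split ℓ, hb j.1, mul_zero, zero_add]
    rfl
  have hmulQ : ∀ x ∈ Q, ∀ y ∈ Q, x * y ∈ Q := by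
    rintro - ⟨a, ha, rfl⟩ - ⟨b, hb, rfl⟩
    exact ⟨a * b, hmulB0 a ha b hb, (phimul a b (hB0row b hb)).symm⟩
  set Wcol : Submodule K (Matrix (Fin (t + 3)) (Fin (t + 3)) K) :=
    B0 ⊓ LinearMap.ker φ with hWcoldef
  have hWcolle : Wcol ≤ colSp0 := by
    intro a ha
    have hker : φ a = 0 := ha.2
    intro i j hij
    rcases hij with hj | hi
    · by_cases hiℓ : i = ℓ
      · rw [hiℓ]; exact hB0row a ha.1 j
      · have h := congrFun (congrFun hker ⟨i, hiℓ⟩) ⟨j, hj⟩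
        simpa [hφdef, cpr] using h
    · rw [hi]; exact hB0row a ha.1 j
  set W : Submodule K ({i : Fin (t + 3) // i ≠ ℓ} → K) := Submodule.map ψ Wcol with hWdef
  have hr1 : finrank K B0 = finrank K Q + finrank K Wcol :=
    finrank_map_add_inf_ker φ B0
  have hr2 : finrank K Wcol = finrank K W := by
    have h := finrank_map_add_inf_ker ψ Wcol
    have hbot : Wcol ⊓ LinearMap.ker ψ = ⊥ := by
      rw [eq_bot_iff]
      intro a ha
      have haW : a ∈ Wcol := ha.1
      have haψ : ψ a = 0 := ha.2
      have haφ : φ a = 0 := haW.2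
      simp only [Submodule.mem_bot]
      ext i j
      by_cases hj : j = ℓ
      · by_cases hi : i = ℓ
        · rw [hi, hj]; exact hB0row a haW.1 ℓ
        · rw [hj]
          have := congrFun haψ ⟨i, hi⟩
          exact this
      · by_cases hi : i = ℓ
        · rw [hi]; exact hB0row a haW.1 j
        · have h2 := congrFun (congrFun haφ ⟨i, hi⟩) ⟨j, hj⟩
          simpa [hφdef, cpr] using h2
    rw [hbot] at h
    simpa using h
  have hinvW : ∀ q ∈ Q, ∀ w ∈ W, q.mulVec w ∈ W := by
    rintro - ⟨a, haB0, rfl⟩ - ⟨c, hcW, rfl⟩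
    have hac : a * c ∈ Wcol := by
      refine ⟨hmulB0 a haB0 c hcW.1, ?_⟩
      show φ (a * c) = 0
      ext i j
      show (a * c) i.1 j.1 = 0
      rw [Matrix.mul_apply]
      apply Finset.sum_eq_zero
      intro k _
      by_cases hk : k = ℓ
      · rw [hk, hB0row c hcW.1 j.1, mul_zero]
      · have h2 : φ c = 0 := hcW.2
        have := congrFun (congrFun h2 ⟨k, hk⟩) j
        have h3 : c k j.1 = 0 := by simpa [hφdef, cpr] using this
        rw [h3, mul_zero]
    refine ⟨a * c, hac, ?_⟩
    show ψ (a * c) = (φ a).mulVec (ψ c)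
    funext i
    show (a * c) i.1 ℓ = _
    rw [Matrix.mul_apply, sum_split ℓ, hB0row c hcW.1 ℓ, mul_zero, zero_add]
    rfl
  -- arithmetic helpers
  have hexp2 : (t + 2) * (t + 2) = t * t + 4 * t + 4 := by ring
  have hexp3 : (t + 3) * (t + 3) = t * t + 6 * t + 9 := by ring
  have hWrankle : finrank K W ≤ t + 2 := by
    have := Submodule.finrank_le W
    rwa [Module.finrank_pi, hcard] at this
  have hQfull_W : Q = ⊤ → W = ⊥ ∨ W = ⊤ := by
    intro hQT
    apply full_invariant
    intro A w hw
    exact hinvW A (by rw [hQT]; trivial) w hw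
  -- main case split: is μ identically zero on B?
  by_cases hμ0 : ∀ a ∈ B.toSubmodule, a ℓ ℓ = 0
  · -- B ⊆ ker μ: contradiction in all cases
    exfalso
    have hB0eq : B0 = B.toSubmodule := by
      rw [hB0def, inf_eq_left]
      intro a ha
      exact hμ0 a ha
    have hfr : finrank K B0 = t * t + 4 * t + 6 := by rw [hB0eq]; exact hdim
    by_cases hQT : Q = ⊤
    · have hQrank : finrank K Q = (t + 2) * (t + 2) := by
        rw [hQT, finrank_top, hMfull]
      rcases hQfull_W hQT with hW | hW
      · have : finrank K W = 0 := by rw [hW, finrank_bot]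
        omega
      · have hWrank : finrank K W = t + 2 := by
          rw [hW, finrank_top, Module.finrank_pi, hcard]
        have ht0 : t = 0 := by omega
        -- n = 3 : B = rowZero, contradicting hBR
        apply hBR
        have hle : B.toSubmodule ≤ rowZero := by
          intro a ha
          intro i j hij
          rw [hij]
          by_cases hj : j = ℓ
          · rw [hj]; exact hμ0 a ha
          · exact hBP a ha j hj
        have heq : B.toSubmodule = rowZero := by
          apply Submodule.eq_of_le_of_finrank_eq hle
          rw [hdim, hrowZeroRank]
          omega
        have := congrArg (fun p : Submodule K (Matrix (Fin (t + 3)) (Fin (t + 3)) K) =>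
          (p : Set (Matrix (Fin (t + 3)) (Fin (t + 3)) K))) heq
        beta_reduce at this
        rw [show (B : Set (Matrix (Fin (t + 3)) (Fin (t + 3)) K))
            = (B.toSubmodule : Set (Matrix (Fin (t + 3)) (Fin (t + 3)) K)) from rfl, this]
        ext A
        constructor
        · intro hA j
          exact hA ℓ j rfl
        · intro hA i j hij
          rw [hij]; exact hA j
    · have hQle := L0 Q hmulQ hQT
      rw [hcard] at hQle
      have hWcolRank : finrank K Wcol ≤ t + 2 := by
        have := Submodule.finrank_mono hWcolle
        rwa [hcolSp0Rank] at this
      omega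
  · -- there is x ∈ B with x ℓ ℓ = 1
    push_neg at hμ0
    obtain ⟨x', hx'B, hx'0⟩ := hμ0
    set x : Matrix (Fin (t + 3)) (Fin (t + 3)) K := (x' ℓ ℓ)⁻¹ • x' with hxdef
    have hxB : x ∈ B.toSubmodule := Submodule.smul_mem _ _ hx'B
    have hxℓℓ : x ℓ ℓ = 1 := by
      rw [hxdef]
      simp [inv_mul_cancel₀ hx'0]
    have hfrB0 : finrank K B0 = t * t + 4 * t + 5 := by
      have h := finrank_map_add_inf_ker μ B.toSubmodule
      have hmap : Submodule.map μ B.toSubmodule = ⊤ := by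
        rw [eq_top_iff]
        intro c _
        exact ⟨c • x, Submodule.smul_mem _ _ hxB, by show (c • x) ℓ ℓ = c; rw [Matrix.smul_apply, hxℓℓ, smul_eq_mul, mul_one]⟩
      rw [hmap, finrank_top, Module.finrank_self, hdim] at h
      have hBk : B.toSubmodule ⊓ LinearMap.ker μ = B0 := rfl
      rw [hBk] at h
      omega
    by_cases hQT : Q = ⊤
    · exfalso
      have hQrank : finrank K Q = (t + 2) * (t + 2) := by
        rw [hQT, finrank_top, hMfull]
      rcases hQfull_W hQT with hW | hW
      · have : finrank K W = 0 := by rw [hW, finrank_bot]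
        omega
      · have : finrank K W = t + 2 := by
          rw [hW, finrank_top, Module.finrank_pi, hcard]
        omega
    · have hQle := L0 Q hmulQ hQT
      rw [hcard] at hQle
      have hWcolRankLe : finrank K Wcol ≤ t + 2 := by
        have := Submodule.finrank_mono hWcolle
        rwa [hcolSp0Rank] at this
      have hQrank : finrank K Q = t * t + 3 * t + 3 := by omega
      have hWcolRank : finrank K Wcol = t + 2 := by omega
      -- apply the classification
      obtain ⟨g, hg⟩ := L_classify Q hmulQ hQT (by rw [hcard]; omega) (by omega) i₀ i₁
      -- 1 ∈ Q
      have honemem : ∀ S : Set (Matrix {i : Fin (t + 3) // i ≠ ℓ} {i : Fin (t + 3) // i ≠ ℓ} K),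
          ((fun A => (↑(g⁻¹) : Matrix _ _ K) * A * (↑g : Matrix _ _ K)) '' (Q : Set _) = S) →
          (1 : Matrix {i : Fin (t + 3) // i ≠ ℓ} {i : Fin (t + 3) // i ≠ ℓ} K) ∈ S →
          (1 : Matrix {i : Fin (t + 3) // i ≠ ℓ} {i : Fin (t + 3) // i ≠ ℓ} K) ∈ Q := by
        intro S hS h1S
        rw [← hS] at h1S
        obtain ⟨q, hqQ, hq1⟩ := h1S
        have hconj1 : conjEquiv g (1 : Matrix {i : Fin (t + 3) // i ≠ ℓ}
            {i : Fin (t + 3) // i ≠ ℓ} K) = 1 := by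
          rw [conjEquiv_apply, mul_one, ← Units.val_mul, inv_mul_cancel, Units.val_one]
        have hq1' : q = 1 := by
          apply (conjEquiv g).injective
          rw [hconj1]
          exact hq1
        rwa [hq1'] at hqQ
      have h1Q : (1 : Matrix {i : Fin (t + 3) // i ≠ ℓ} {i : Fin (t + 3) // i ≠ ℓ} K) ∈ Q := by
        rcases hg with hg | hg
        · exact honemem _ hg (by intro i hi; exact Matrix.one_apply_ne (by
            intro hc; exact hi (by rw [hc])))
        · exact honemem _ hg (by intro j hj; exact Matrix.one_apply_ne (by
            intro hc; exact hj (by rw [← hc])))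
      obtain ⟨b, hbB0, hbφ⟩ := h1Q
      have hφx : φ x ∈ Q := by
        have hxb : x * b ∈ B0 := by
          refine ⟨B.mul_mem hxB hbB0.1, ?_⟩
          show (x * b) ℓ ℓ = 0
          rw [Matrix.mul_apply, sum_split ℓ, hB0row b hbB0 ℓ, mul_zero, zero_add]
          apply Finset.sum_eq_zero
          intro k _
          rw [hBP x hxB k.1 k.2, zero_mul]
        have h2 : φ x * φ b = φ (x * b) := phimul x b (hB0row b hbB0)
        rw [hbφ, mul_one] at h2
        rw [h2]
        exact ⟨x * b, hxb, rfl⟩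
      -- B = T
      set T : Submodule K (Matrix (Fin (t + 3)) (Fin (t + 3)) K) :=
        rowOff ⊓ Submodule.comap φ Q with hTdef
      have hBT : B.toSubmodule ≤ T := by
        intro a ha
        constructor
        · intro i j hij
          rw [hij.1]
          exact hBP a ha j hij.2
        · show φ a ∈ Q
          have hdiff : a - (a ℓ ℓ) • x ∈ B0 := by
            refine ⟨Submodule.sub_mem _ ha (Submodule.smul_mem _ _ hxB), ?_⟩
            show (a - (a ℓ ℓ) • x) ℓ ℓ = 0
            simp [hxℓℓ]
          have : φ a = φ (a - (a ℓ ℓ) • x) + (a ℓ ℓ) • φ x := by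
            rw [map_sub, _root_.map_smul]; abel
          rw [this]
          exact Submodule.add_mem _ ⟨_, hdiff, rfl⟩ (Submodule.smul_mem _ _ hφx)
      have hmapT : Submodule.map φ T = Q := by
        apply le_antisymm
        · rintro - ⟨a, ha, rfl⟩
          exact ha.2
        · rintro - ⟨a, ha, rfl⟩
          refine ⟨a, ⟨?_, ?_⟩, rfl⟩
          · intro i j hij
            rw [hij.1]
            exact hB0row a ha j
          · show φ a ∈ Q
            exact ⟨a, ha, rfl⟩
      have hinfT : T ⊓ LinearMap.ker φ = colSp := by
        ext a
        constructor
        · rintro ⟨⟨harow, -⟩, hker⟩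
          intro i j hj
          by_cases hi : i = ℓ
          · exact harow i j ⟨hi, hj⟩
          · have h2 : φ a = 0 := hker
            have := congrFun (congrFun h2 ⟨i, hi⟩) ⟨j, hj⟩
            simpa [hφdef, cpr] using this
        · intro ha
          refine ⟨⟨?_, ?_⟩, ?_⟩
          · intro i j hij
            exact ha i j hij.2
          · show φ a ∈ Q
            have : φ a = 0 := by
              ext i j
              show a i.1 j.1 = 0
              exact ha i.1 j.1 j.2
            rw [this]
            exact Submodule.zero_mem _
          · show φ a = 0
            ext i j
            show a i.1 j.1 = 0
            exact ha i.1 j.1 j.2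
      have hTrank : finrank K T = t * t + 4 * t + 6 := by
        have h := finrank_map_add_inf_ker φ T
        rw [hmapT, hinfT, hQrank, hcolSpRank] at h
        omega
      have hBeqT : B.toSubmodule = T :=
        Submodule.eq_of_le_of_finrank_eq hBT (by rw [hdim, hTrank])
      have hBsetT : (B : Set (Matrix (Fin (t + 3)) (Fin (t + 3)) K))
          = {A | (∀ i j, i = ℓ ∧ j ≠ ℓ → A i j = 0) ∧ φ A ∈ Q} := by
        have := congrArg (fun p : Submodule K (Matrix (Fin (t + 3)) (Fin (t + 3)) K) =>
          (p : Set (Matrix (Fin (t + 3)) (Fin (t + 3)) K))) hBeqT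
        beta_reduce at this
        rw [show (B : Set (Matrix (Fin (t + 3)) (Fin (t + 3)) K))
            = (B.toSubmodule : Set (Matrix (Fin (t + 3)) (Fin (t + 3)) K)) from rfl, this]
        rfl
      -- final assembly
      refine ⟨g, ?_⟩
      have hconjinv : ∀ C : Matrix (Fin (t + 3)) (Fin (t + 3)) K,
          emb ℓ (↑(g⁻¹) : Matrix _ _ K) *
            (emb ℓ (↑g : Matrix _ _ K) * C * emb ℓ (↑(g⁻¹) : Matrix _ _ K)) *
            emb ℓ (↑g : Matrix _ _ K) = C := by
        intro C
        calc emb ℓ (↑(g⁻¹) : Matrix _ _ K) *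
              (emb ℓ (↑g : Matrix _ _ K) * C * emb ℓ (↑(g⁻¹) : Matrix _ _ K)) *
              emb ℓ (↑g : Matrix _ _ K)
            = (emb ℓ (↑(g⁻¹) : Matrix _ _ K) * emb ℓ (↑g : Matrix _ _ K)) * C *
              (emb ℓ (↑(g⁻¹) : Matrix _ _ K) * emb ℓ (↑g : Matrix _ _ K)) := by noncomm_ring
          _ = C := by
              rw [emb_mul, ← Units.val_mul, inv_mul_cancel, Units.val_one, emb_one,
                one_mul, mul_one]
      rcases hg with hg | hg
      · left
        ext C
        constructor
        · rintro ⟨A, hA, rfl⟩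
          rw [hBsetT] at hA
          obtain ⟨hArow, hAφ⟩ := hA
          have hArow' : ∀ j, j ≠ ℓ → A ℓ j = 0 := fun j hj => hArow ℓ j ⟨rfl, hj⟩
          constructor
          · intro j hj
            exact conj_row ℓ _ _ A hArow' j hj
          · intro i hi
            by_cases hiℓ : i = ℓ
            · rw [hiℓ]
              exact conj_row ℓ _ _ A hArow' i₀.1 i₀.2
            · have hmem : (↑(g⁻¹) : Matrix _ _ K) * φ A * (↑g : Matrix _ _ K)
                  ∈ {X : Matrix {i : Fin (t + 3) // i ≠ ℓ} {i : Fin (t + 3) // i ≠ ℓ} K |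
                      ∀ i, i ≠ i₀ → X i i₀ = 0} := by
                rw [← hg]
                exact ⟨φ A, hAφ, rfl⟩
              have := hmem ⟨i, hiℓ⟩ (fun hc => hi (congrArg Subtype.val hc))
              rw [← this]
              exact conj_corner ℓ _ _ A ⟨i, hiℓ⟩ i₀
        · rintro ⟨hC1, hC2⟩
          refine ⟨emb ℓ (↑g : Matrix _ _ K) * C * emb ℓ (↑(g⁻¹) : Matrix _ _ K), ?_, ?_⟩
          · rw [hBsetT]
            constructor
            · intro i j hij
              rw [hij.1]
              exact conj_row ℓ _ _ C hC1 j hij.2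
            · have hφform : φ (emb ℓ (↑g : Matrix _ _ K) * C * emb ℓ (↑(g⁻¹) : Matrix _ _ K))
                  = (↑g : Matrix _ _ K) * φ C * (↑(g⁻¹) : Matrix _ _ K) := by
                ext i j
                exact conj_corner ℓ _ _ C i j
              rw [hφform]
              have hmem : φ C ∈ {X : Matrix {i : Fin (t + 3) // i ≠ ℓ}
                  {i : Fin (t + 3) // i ≠ ℓ} K | ∀ i, i ≠ i₀ → X i i₀ = 0} := by
                intro i hi
                exact hC2 i.1 (fun hc => hi (Subtype.ext hc))
              rw [← hg] at hmem
              obtain ⟨q, hqQ, hq⟩ := hmem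
              have : (↑g : Matrix _ _ K) * φ C * (↑(g⁻¹) : Matrix _ _ K) = q := by
                rw [← hq]
                have := (conjEquiv g).symm_apply_apply q
                exact this
              rw [this]
              exact hqQ
          · exact hconjinv C
      · right
        ext C
        constructor
        · rintro ⟨A, hA, rfl⟩
          rw [hBsetT] at hA
          obtain ⟨hArow, hAφ⟩ := hA
          have hArow' : ∀ j, j ≠ ℓ → A ℓ j = 0 := fun j hj => hArow ℓ j ⟨rfl, hj⟩
          constructor
          · intro j hj
            exact conj_row ℓ _ _ A hArow' j hj
          · intro j hji hjℓ
            have hmem : (↑(g⁻¹) : Matrix _ _ K) * φ A * (↑g : Matrix _ _ K)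
                ∈ {X : Matrix {i : Fin (t + 3) // i ≠ ℓ} {i : Fin (t + 3) // i ≠ ℓ} K |
                    ∀ j, j ≠ i₁ → X i₁ j = 0} := by
              rw [← hg]
              exact ⟨φ A, hAφ, rfl⟩
            have := hmem ⟨j, hjℓ⟩ (fun hc => hji (congrArg Subtype.val hc))
            rw [← this]
            exact conj_corner ℓ _ _ A i₁ ⟨j, hjℓ⟩
        · rintro ⟨hC1, hC2⟩
          refine ⟨emb ℓ (↑g : Matrix _ _ K) * C * emb ℓ (↑(g⁻¹) : Matrix _ _ K), ?_, ?_⟩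
          · rw [hBsetT]
            constructor
            · intro i j hij
              rw [hij.1]
              exact conj_row ℓ _ _ C hC1 j hij.2
            · have hφform : φ (emb ℓ (↑g : Matrix _ _ K) * C * emb ℓ (↑(g⁻¹) : Matrix _ _ K))
                  = (↑g : Matrix _ _ K) * φ C * (↑(g⁻¹) : Matrix _ _ K) := by
                ext i j
                exact conj_corner ℓ _ _ C i j
              rw [hφform]
              have hmem : φ C ∈ {X : Matrix {i : Fin (t + 3) // i ≠ ℓ}
                  {i : Fin (t + 3) // i ≠ ℓ} K | ∀ j, j ≠ i₁ → X i₁ j = 0} := by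
                intro j hj
                exact hC2 j.1 (fun hc => hj (Subtype.ext hc)) j.2
              rw [← hg] at hmem
              obtain ⟨q, hqQ, hq⟩ := hmem
              have : (↑g : Matrix _ _ K) * φ C * (↑(g⁻¹) : Matrix _ _ K) = q := by
                rw [← hq]
                exact (conjEquiv g).symm_apply_apply q
              rw [this]
              exact hqQ
          · exact hconjinv C

end Main


end Helpers12

set_option maxHeartbeats 3200000 in
/-- For `n ≥ 3`, a proper subalgebra `B ≠ M[Rₙ]` of the parabolic
`P = M[Rₙ] + K·Eₙₙ` of dimension `n² - 2n + 3` is similar to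
`M·Eₙₙ + M[Rₙ,C₁] + K·E₁₁` or to `M·Eₙₙ + M[Rₙ,Rₙ₋₁] + K·Eₙ₋₁,ₙ₋₁`. -/
theorem stmt12 (K : Type*) [Field K] [CharZero K] (n : ℕ) (hn : 3 ≤ n)
    (B : NonUnitalSubalgebra K (Matrix (Fin n) (Fin n) K))
    (hBP : (B : Set (Matrix (Fin n) (Fin n) K))
        ⊆ {A | ∀ j, j ≠ ⟨n - 1, by omega⟩ → A ⟨n - 1, by omega⟩ j = 0})
    (hBne : (B : Set (Matrix (Fin n) (Fin n) K))
        ≠ {A | ∀ j, j ≠ ⟨n - 1, by omega⟩ → A ⟨n - 1, by omega⟩ j = 0})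
    (hBR : (B : Set (Matrix (Fin n) (Fin n) K))
        ≠ {A | ∀ j, A ⟨n - 1, by omega⟩ j = 0})
    (hdim : Module.finrank K B = n ^ 2 - 2 * n + 3) :
    ∃ S : (Matrix (Fin n) (Fin n) K)ˣ,
      ((fun M => (↑S⁻¹ : Matrix (Fin n) (Fin n) K) * M * (↑S : Matrix (Fin n) (Fin n) K)) ''
          (B : Set (Matrix (Fin n) (Fin n) K))
        = (Set.range fun M : Matrix (Fin n) (Fin n) K =>
              M * Matrix.single (⟨n - 1, by omega⟩ : Fin n) (⟨n - 1, by omega⟩ : Fin n) (1 : K))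
          + {A : Matrix (Fin n) (Fin n) K | (∀ j, A ⟨n - 1, by omega⟩ j = 0) ∧
              (∀ i, A i ⟨0, by omega⟩ = 0)}
          + (Set.range fun c : K =>
              c • Matrix.single (⟨0, by omega⟩ : Fin n) (⟨0, by omega⟩ : Fin n) (1 : K))) ∨
      ((fun M => (↑S⁻¹ : Matrix (Fin n) (Fin n) K) * M * (↑S : Matrix (Fin n) (Fin n) K)) ''
          (B : Set (Matrix (Fin n) (Fin n) K))
        = (Set.range fun M : Matrix (Fin n) (Fin n) K =>
              M * Matrix.single (⟨n - 1, by omega⟩ : Fin n) (⟨n - 1, by omega⟩ : Fin n) (1 : K))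
          + {A : Matrix (Fin n) (Fin n) K | (∀ j, A ⟨n - 1, by omega⟩ j = 0) ∧
              (∀ j, A ⟨n - 2, by omega⟩ j = 0)}
          + (Set.range fun c : K =>
              c • Matrix.single (⟨n - 2, by omega⟩ : Fin n) (⟨n - 2, by omega⟩ : Fin n) (1 : K))) := by
  classical
  obtain ⟨t, rfl⟩ : ∃ t, n = t + 3 := ⟨n - 3, by omega⟩
  have hz0 : (⟨0, by omega⟩ : Fin (t + 3)) ≠ (⟨t + 3 - 1, by omega⟩ : Fin (t + 3)) := by
    simp [Fin.ext_iff]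
  have hz1 : (⟨t + 3 - 2, by omega⟩ : Fin (t + 3)) ≠ (⟨t + 3 - 1, by omega⟩ : Fin (t + 3)) := by
    simp [Fin.ext_iff]
  have hBP' : ∀ A ∈ B, ∀ j, j ≠ (⟨t + 3 - 1, by omega⟩ : Fin (t + 3)) →
      A (⟨t + 3 - 1, by omega⟩ : Fin (t + 3)) j = 0 := fun A hA => hBP hA
  have hdim' : finrank K B.toSubmodule = t * t + 4 * t + 6 := by
    have h0 : Module.finrank K B = finrank K B.toSubmodule := rfl
    rw [h0] at hdim
    rw [hdim, pow_two]
    have : (t + 3) * (t + 3) = t * t + 6 * t + 9 := by ring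
    omega
  obtain ⟨g, hg⟩ := main_core (⟨t + 3 - 1, by omega⟩ : Fin (t + 3)) B hBP' hBR hdim'
    ⟨⟨0, by omega⟩, hz0⟩ ⟨⟨t + 3 - 2, by omega⟩, hz1⟩
  refine ⟨embUnit (⟨t + 3 - 1, by omega⟩ : Fin (t + 3)) g, ?_⟩
  rcases hg with hg | hg
  · left
    rw [targetset1 (⟨t + 3 - 1, by omega⟩ : Fin (t + 3)) (⟨0, by omega⟩ : Fin (t + 3)) hz0]
    exact hg
  · right
    rw [targetset2 (⟨t + 3 - 1, by omega⟩ : Fin (t + 3)) (⟨t + 3 - 2, by omega⟩ : Fin (t + 3)) hz1]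
    exact hg
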